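/- If G' is obtained from G by inserting edge (a,b), then for all vertices v, u: dist_{G'}(v,u) = min(dist_G(v,u), dist_G(v,a) + 1 + dist_G(b,u), dist_G(v,b) + 1 + dist_G(a,u)). -/

import Mathlib

open SimpleGraph

private lemma aux_step {V : Type*} (G : SimpleGraph V) (a b u : V) {x y : V}
    (h : (G ⊔ SimpleGraph.edge a b).Adj x y) :
    min (G.edist x u) (min (G.edist x a + 1 + G.edist b u) (G.edist x b + 1 + G.edist a u))
      ≤ min (G.edist y u) (min (G.edist y a + 1 + G.edist b u) (G.edist y b + 1 + G.edist a u))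
        + 1 := by
  have B1 : min (G.edist x u) (min (G.edist x a + 1 + G.edist b u)
      (G.edist x b + 1 + G.edist a u)) ≤ G.edist y u + 1 := by
    rcases h with hG | he
    · have hxy : G.edist x y ≤ 1 := le_of_eq (edist_eq_one_iff_adj.mpr hG)
      refine le_trans (min_le_left _ _) ?_
      calc G.edist x u ≤ G.edist x y + G.edist y u := SimpleGraph.edist_triangle
        _ ≤ 1 + G.edist y u := add_le_add_left hxy _
        _ = G.edist y u + 1 := add_comm _ _
    · rw [SimpleGraph.edge_adj] at he
      rcases he.1 with ⟨hx, hy⟩ | ⟨hx, hy⟩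
      · refine le_trans (le_trans (min_le_right _ _) (min_le_left _ _)) ?_
        rw [hx, hy, SimpleGraph.edist_self, zero_add, add_comm]
      · refine le_trans (le_trans (min_le_right _ _) (min_le_right _ _)) ?_
        rw [hx, hy, SimpleGraph.edist_self, zero_add, add_comm]
  have B2 : min (G.edist x u) (min (G.edist x a + 1 + G.edist b u)
      (G.edist x b + 1 + G.edist a u)) ≤ (G.edist y a + 1 + G.edist b u) + 1 := by
    rcases h with hG | he
    · have hxy : G.edist x y ≤ 1 := le_of_eq (edist_eq_one_iff_adj.mpr hG)
      refine le_trans (le_trans (min_le_right _ _) (min_le_left _ _)) ?_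
      have hxa : G.edist x a ≤ G.edist y a + 1 := by
        calc G.edist x a ≤ G.edist x y + G.edist y a := SimpleGraph.edist_triangle
          _ ≤ 1 + G.edist y a := add_le_add_left hxy _
          _ = G.edist y a + 1 := add_comm _ _
      calc G.edist x a + 1 + G.edist b u
          ≤ (G.edist y a + 1) + 1 + G.edist b u :=
            add_le_add_left (add_le_add_left hxa _) _
        _ = (G.edist y a + 1 + G.edist b u) + 1 := by ring
    · rw [SimpleGraph.edge_adj] at he
      rcases he.1 with ⟨hx, hy⟩ | ⟨hx, hy⟩
      · refine le_trans (le_trans (min_le_right _ _) (min_le_left _ _)) ?_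
        rw [hx, hy, SimpleGraph.edist_self, zero_add]
        calc (1 : ℕ∞) + G.edist b u ≤ (1 + G.edist b u) + (G.edist b a + 1) := le_self_add
          _ = G.edist b a + 1 + G.edist b u + 1 := by ring
      · refine le_trans (min_le_left _ _) ?_
        rw [hx, hy]
        calc G.edist b u ≤ G.edist b u + (G.edist a a + 1 + 1) := le_self_add
          _ = G.edist a a + 1 + G.edist b u + 1 := by ring
  have B3 : min (G.edist x u) (min (G.edist x a + 1 + G.edist b u)
      (G.edist x b + 1 + G.edist a u)) ≤ (G.edist y b + 1 + G.edist a u) + 1 := by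
    rcases h with hG | he
    · have hxy : G.edist x y ≤ 1 := le_of_eq (edist_eq_one_iff_adj.mpr hG)
      refine le_trans (le_trans (min_le_right _ _) (min_le_right _ _)) ?_
      have hxb : G.edist x b ≤ G.edist y b + 1 := by
        calc G.edist x b ≤ G.edist x y + G.edist y b := SimpleGraph.edist_triangle
          _ ≤ 1 + G.edist y b := add_le_add_left hxy _
          _ = G.edist y b + 1 := add_comm _ _
      calc G.edist x b + 1 + G.edist a u
          ≤ (G.edist y b + 1) + 1 + G.edist a u :=
            add_le_add_left (add_le_add_left hxb _) _
        _ = (G.edist y b + 1 + G.edist a u) + 1 := by ring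
    · rw [SimpleGraph.edge_adj] at he
      rcases he.1 with ⟨hx, hy⟩ | ⟨hx, hy⟩
      · refine le_trans (min_le_left _ _) ?_
        rw [hx, hy]
        calc G.edist a u ≤ G.edist a u + (G.edist b b + 1 + 1) := le_self_add
          _ = G.edist b b + 1 + G.edist a u + 1 := by ring
      · refine le_trans (le_trans (min_le_right _ _) (min_le_right _ _)) ?_
        rw [hx, hy, SimpleGraph.edist_self, zero_add]
        calc (1 : ℕ∞) + G.edist a u ≤ (1 + G.edist a u) + (G.edist a b + 1) := le_self_add
          _ = G.edist a b + 1 + G.edist a u + 1 := by ring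
  rcases le_total (G.edist y u)
      (min (G.edist y a + 1 + G.edist b u) (G.edist y b + 1 + G.edist a u)) with h1 | h1
  · rw [min_eq_left h1]; exact B1
  · rw [min_eq_right h1]
    rcases le_total (G.edist y a + 1 + G.edist b u) (G.edist y b + 1 + G.edist a u) with h2 | h2
    · rw [min_eq_left h2]; exact B2
    · rw [min_eq_right h2]; exact B3

private lemma aux_walk {V : Type*} (G : SimpleGraph V) (a b : V) :
    ∀ {x u : V} (p : (G ⊔ SimpleGraph.edge a b).Walk x u),
    min (G.edist x u) (min (G.edist x a + 1 + G.edist b u) (G.edist x b + 1 + G.edist a u))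
      ≤ p.length := by
  intro x u p
  induction p with
  | nil => exact le_trans (min_le_left _ _) (by simp [SimpleGraph.edist_self])
  | @cons x y z h q ih =>
    calc min (G.edist x z) (min (G.edist x a + 1 + G.edist b z)
          (G.edist x b + 1 + G.edist a z))
        ≤ min (G.edist y z) (min (G.edist y a + 1 + G.edist b z)
          (G.edist y b + 1 + G.edist a z)) + 1 := aux_step G a b z h
      _ ≤ (q.length : ℕ∞) + 1 := add_le_add_left ih _
      _ = ((q.cons h).length : ℕ∞) := by
          rw [SimpleGraph.Walk.length_cons]; push_cast; ring

theorem stmt_18 {V : Type*} (G : SimpleGraph V) (a b : V) (hab : a ≠ b)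
    (G' : SimpleGraph V) (hG' : G' = G ⊔ SimpleGraph.edge a b) (v u : V) :
    G'.edist v u =
      min (G.edist v u)
        (min (G.edist v a + 1 + G.edist b u) (G.edist v b + 1 + G.edist a u)) := by
  have hle : G ≤ G' := by rw [hG']; exact le_sup_left
  have hadj : G'.Adj a b := by
    rw [hG']
    exact Or.inr ((SimpleGraph.edge_adj a b a b).mpr ⟨Or.inl ⟨rfl, rfl⟩, hab⟩)
  have hab1 : G'.edist a b = 1 := edist_eq_one_iff_adj.mpr hadj
  have hba1 : G'.edist b a = 1 := by rw [edist_comm]; exact hab1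
  apply le_antisymm
  · refine le_min (edist_anti hle) (le_min ?_ ?_)
    · calc G'.edist v u ≤ G'.edist v a + G'.edist a u := SimpleGraph.edist_triangle
        _ ≤ G'.edist v a + (G'.edist a b + G'.edist b u) :=
            add_le_add_right SimpleGraph.edist_triangle _
        _ = G'.edist v a + G'.edist a b + G'.edist b u := (add_assoc _ _ _).symm
        _ ≤ G.edist v a + 1 + G.edist b u :=
            add_le_add (add_le_add (edist_anti hle) (le_of_eq hab1)) (edist_anti hle)
    · calc G'.edist v u ≤ G'.edist v b + G'.edist b u := SimpleGraph.edist_triangle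
        _ ≤ G'.edist v b + (G'.edist b a + G'.edist a u) :=
            add_le_add_right SimpleGraph.edist_triangle _
        _ = G'.edist v b + G'.edist b a + G'.edist a u := (add_assoc _ _ _).symm
        _ ≤ G.edist v b + 1 + G.edist a u :=
            add_le_add (add_le_add (edist_anti hle) (le_of_eq hba1)) (edist_anti hle)
  · by_cases htop : G'.edist v u = ⊤
    · rw [htop]; exact le_top
    · obtain ⟨p, hp⟩ := exists_walk_of_edist_ne_top htop
      rw [← hp]
      subst hG'
      exact aux_walk G a b p
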